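/- arXiv:1808.05780 — 6 statements merged into one kernel-verified Lean document; each statement's English description precedes it below -/
import Mathlib

section
/- Let T1, T2 be disjoint subsets of [n] and v ∈ R^n. Define T1# = {i : v_i > 0.5} and T2# = {i : v_i < -0.5}. If ‖(1_{T1} - 1_{T2}) - v‖_2 ≤ D, then |T1 △ T1#| + |T2 △ T2#| ≤ 4D². -/
/-- If `T1, T2 ⊆ [n]` are disjoint and `v ∈ ℝⁿ` satisfies
`‖(1_{T1} - 1_{T2}) - v‖₂ ≤ D`, and `T1# = {i : v i > 0.5}`, `T2# = {i : v i < -0.5}`,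
then `|T1 △ T1#| + |T2 △ T2#| ≤ 4 D²`. -/
theorem support_error (n : ℕ) (T1 T2 : Finset (Fin n)) (hdis : Disjoint T1 T2)
    (v : Fin n → ℝ) (D : ℝ)
    (hD : Real.sqrt (∑ i, (((if i ∈ T1 then (1 : ℝ) else 0) -
        (if i ∈ T2 then (1 : ℝ) else 0)) - v i) ^ 2) ≤ D) :
    ((symmDiff T1 (Finset.univ.filter fun i => 0.5 < v i)).card
      + (symmDiff T2 (Finset.univ.filter fun i => v i < -0.5)).card : ℝ) ≤ 4 * D ^ 2 := by
  set A := symmDiff T1 (Finset.univ.filter fun i => 0.5 < v i) with hA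
  set B := symmDiff T2 (Finset.univ.filter fun i => v i < -0.5) with hB
  set f : Fin n → ℝ := fun i => (((if i ∈ T1 then (1 : ℝ) else 0) -
        (if i ∈ T2 then (1 : ℝ) else 0)) - v i) ^ 2 with hf
  have hd := Finset.disjoint_left.mp hdis
  have hsum : ∀ i : Fin n,
      ((if i ∈ A then (1:ℝ) else 0) + (if i ∈ B then (1:ℝ) else 0)) ≤ 4 * f i := by
    intro i
    by_cases h1 : i ∈ T1 <;> by_cases h2 : i ∈ T2 <;>
      by_cases h3 : (0.5:ℝ) < v i <;> by_cases h4 : v i < -0.5 <;>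
      simp only [hA, hB, hf, Finset.mem_symmDiff, Finset.mem_filter, Finset.mem_univ,
        h1, h2, h3, h4, if_true, if_false, true_and, and_true, false_and, and_false,
        not_true_eq_false, not_false_eq_true, or_false, false_or, or_true, true_or,
        if_pos, if_neg, not_false_iff] <;>
      first
        | exact absurd h2 (hd h1)
        | nlinarith
  have hS0 : (0:ℝ) ≤ ∑ i, f i := Finset.sum_nonneg fun i _ => sq_nonneg _
  have hS : ∑ i, f i ≤ D ^ 2 := by
    nlinarith [Real.sq_sqrt hS0, Real.sqrt_nonneg (∑ i, f i), hD]
  have htot : ((A.card : ℝ) + B.card) ≤ 4 * ∑ i, f i := by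
    have h := Finset.sum_le_sum (fun i (_ : i ∈ Finset.univ) => hsum i)
    have e1 : ∑ i, (if i ∈ A then (1:ℝ) else 0) = A.card := by
      simp [Finset.sum_ite_mem]
    have e2 : ∑ i, (if i ∈ B then (1:ℝ) else 0) = B.card := by
      simp [Finset.sum_ite_mem]
    rw [Finset.sum_add_distrib, e1, e2, ← Finset.mul_sum] at h
    exact h
  calc ((A.card : ℝ) + B.card) ≤ 4 * ∑ i, f i := htot
    _ ≤ 4 * D ^ 2 := by linarith
end

section
/- Let G be a graph whose vertex set is partitioned into disjoint clusters C_1,...,C_k with n_1 = min_a |C_a|, and let L^in be the Laplacian of the subgraph G^in consisting only of within-cluster edges (so the connected components of G^in include the C_a, each C_a inducing a connected subgraph). Let Ω ⊂ V, let a ∈ [k], set U = C_a \ Ω, W = Ω \ C_a, and y^in = L^in 1_Ω. If |C_a △ Ω| ≤ s < n_1/2, then x = 1_W - 1_U is the unique minimizer of ‖L^in x - y^in‖_2 subject to ‖x‖_0 ≤ s (in fact the unique s-sparse solution of L^in x = y^in). -/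
/-- Let the vertex set `[n]` be partitioned into disjoint clusters
`C 0, …, C (k-1)`, and let `Lin` be the Laplacian of the within-cluster subgraph, so
that the kernel of `Lin` is spanned by the cluster indicator vectors.  Let `Ω ⊆ [n]`,
`U = C a \ Ω`, `W = Ω \ C a`, and `y^in = Lin 1_Ω`.  If `|C a △ Ω| ≤ s < n₁/2`
(where `n₁ = min_b |C b|`, encoded as `2s < |C b|` for every `b`), then
`x₀ = 1_W - 1_U` is the unique `s`-sparse solution of `Lin x = y^in` (hence the
unique minimizer of `‖Lin x - y^in‖₂` subject to `‖x‖₀ ≤ s`). -/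
theorem unique_sparse_solution (n k : ℕ) (C : Fin k → Finset (Fin n))
    (hdis : ∀ a b, a ≠ b → Disjoint (C a) (C b)) (hcov : ∀ i, ∃ a, i ∈ C a)
    (Lin : Matrix (Fin n) (Fin n) ℝ)
    (hker : ∀ x : Fin n → ℝ, Lin.mulVec x = 0 ↔
      ∃ α : Fin k → ℝ, x = ∑ b, α b • (fun i => if i ∈ C b then (1 : ℝ) else 0))
    (a : Fin k) (Ω : Finset (Fin n)) (s : ℕ)
    (hs1 : (symmDiff (C a) Ω).card ≤ s) (hs2 : ∀ b, 2 * s < (C b).card) :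
    Lin.mulVec (fun i => (if i ∈ Ω \ C a then (1 : ℝ) else 0) -
        (if i ∈ C a \ Ω then (1 : ℝ) else 0)) =
      Lin.mulVec (fun i => if i ∈ Ω then (1 : ℝ) else 0) ∧
    (Function.support fun i => (if i ∈ Ω \ C a then (1 : ℝ) else 0) -
        (if i ∈ C a \ Ω then (1 : ℝ) else 0)).ncard ≤ s ∧
    ∀ v : Fin n → ℝ, (Function.support v).ncard ≤ s →
      Lin.mulVec v = Lin.mulVec (fun i => if i ∈ Ω then (1 : ℝ) else 0) →
      v = fun i => (if i ∈ Ω \ C a then (1 : ℝ) else 0) -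
        (if i ∈ C a \ Ω then (1 : ℝ) else 0) := by
  set x₀ : Fin n → ℝ := fun i => (if i ∈ Ω \ C a then (1 : ℝ) else 0) -
      (if i ∈ C a \ Ω then (1 : ℝ) else 0) with hx₀
  set xΩ : Fin n → ℝ := fun i => if i ∈ Ω then (1 : ℝ) else 0 with hxΩ
  have hdiff : xΩ - x₀ = fun i => if i ∈ C a then (1 : ℝ) else 0 := by
    funext i
    simp only [Pi.sub_apply, hx₀, hxΩ, Finset.mem_sdiff]
    by_cases h1 : i ∈ C a <;> by_cases h2 : i ∈ Ω <;> simp [h1, h2]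
  have hCa0 : Lin.mulVec (fun i => if i ∈ C a then (1 : ℝ) else 0) = 0 := by
    rw [hker]
    refine ⟨fun b => if b = a then 1 else 0, ?_⟩
    funext i
    simp only [Finset.sum_apply, Pi.smul_apply, smul_eq_mul]
    rw [Finset.sum_eq_single a]
    · simp
    · intro b _ hb; simp [hb]
    · simp
  have hLeq : Lin.mulVec x₀ = Lin.mulVec xΩ := by
    have := congrArg Lin.mulVec hdiff
    rw [Matrix.mulVec_sub, hCa0, sub_eq_zero] at this
    exact this.symm
  have hsupp : Function.support x₀ ⊆ ↑(symmDiff (C a) Ω) := by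
    intro i hi
    simp only [Function.mem_support, hx₀] at hi
    simp only [Finset.coe_symmDiff, Set.mem_symmDiff, Finset.mem_coe]
    by_cases h1 : i ∈ C a <;> by_cases h2 : i ∈ Ω <;>
      simp [h1, h2, Finset.mem_sdiff] at hi ⊢
  have hsuppcard : (Function.support x₀).ncard ≤ s := by
    calc (Function.support x₀).ncard
        ≤ (↑(symmDiff (C a) Ω) : Set (Fin n)).ncard :=
          Set.ncard_le_ncard hsupp (Set.toFinite _)
      _ = (symmDiff (C a) Ω).card := Set.ncard_coe_finset _
      _ ≤ s := hs1
  refine ⟨hLeq, hsuppcard, ?_⟩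
  intro v hv1 hv2
  have h0 : Lin.mulVec (v - x₀) = 0 := by
    rw [Matrix.mulVec_sub, hv2, hLeq, sub_self]
  obtain ⟨α, hα⟩ := (hker _).mp h0
  have hval : ∀ b : Fin k, ∀ i ∈ C b, (v - x₀) i = α b := by
    intro b i hi
    rw [hα]
    simp only [Finset.sum_apply, Pi.smul_apply, smul_eq_mul]
    rw [Finset.sum_eq_single b]
    · simp [hi]
    · intro b' _ hb'
      have : i ∉ C b' := fun hmem =>
        (Finset.disjoint_left.mp (hdis b' b hb') hmem) hi
      simp [this]
    · simp
  have hα0 : ∀ b, α b = 0 := by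
    intro b
    by_contra hb
    have hsub : (↑(C b) : Set (Fin n)) ⊆
        Function.support v ∪ Function.support x₀ := by
      intro i hi
      have hvi := hval b i hi
      by_contra hmem
      simp only [Set.mem_union, Function.mem_support, not_or, not_not] at hmem
      rw [Pi.sub_apply, hmem.1, hmem.2, sub_zero] at hvi
      exact hb hvi.symm
    have hle : (C b).card ≤ 2 * s := by
      calc (C b).card = (↑(C b) : Set (Fin n)).ncard :=
            (Set.ncard_coe_finset _).symm
        _ ≤ (Function.support v ∪ Function.support x₀).ncard :=
            Set.ncard_le_ncard hsub (Set.toFinite _)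
        _ ≤ (Function.support v).ncard + (Function.support x₀).ncard :=
            Set.ncard_union_le _ _
        _ ≤ s + s := add_le_add hv1 hsuppcard
        _ = 2 * s := (two_mul s).symm
    exact absurd (hs2 b) (not_lt.mpr hle)
  have : v - x₀ = 0 := by
    rw [hα]; funext i; simp [hα0]
  rw [sub_eq_zero] at this
  exact this
end

section
/- Let L^in be a block-diagonal matrix with diagonal blocks B_1,...,B_k (each B_a of size n_a × n_a, indexed by a partition of [n]). Then for any s, the s-restricted isometry constant satisfies δ_s(L^in) = max_a δ_s(B_a). -/
open Matrix

/-- The `s`-restricted isometry constant of a matrix `Φ`. -/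
noncomputable def ric {ι κ : Type*} [Fintype ι] [Fintype κ]
    (Φ : Matrix ι κ ℝ) (s : ℕ) : ℝ :=
  sInf {δ : ℝ | 0 ≤ δ ∧ ∀ x : κ → ℝ, (Function.support x).ncard ≤ s →
    (1 - δ) * ∑ j, x j ^ 2 ≤ ∑ i, (Φ.mulVec x i) ^ 2 ∧
    ∑ i, (Φ.mulVec x i) ^ 2 ≤ (1 + δ) * ∑ j, x j ^ 2}

section Aux

variable {ι κ : Type*} [Fintype ι] [Fintype κ]

/-- The admissible set of RIC constants. -/
def RS (Φ : Matrix ι κ ℝ) (s : ℕ) : Set ℝ :=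
  {δ : ℝ | 0 ≤ δ ∧ ∀ x : κ → ℝ, (Function.support x).ncard ≤ s →
    (1 - δ) * ∑ j, x j ^ 2 ≤ ∑ i, (Φ.mulVec x i) ^ 2 ∧
    ∑ i, (Φ.mulVec x i) ^ 2 ≤ (1 + δ) * ∑ j, x j ^ 2}

lemma ric_eq_sInf_RS (Φ : Matrix ι κ ℝ) (s : ℕ) : ric Φ s = sInf (RS Φ s) := rfl

lemma RS_upward {Φ : Matrix ι κ ℝ} {s : ℕ} {δ δ' : ℝ} (h : δ ∈ RS Φ s) (hle : δ ≤ δ') :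
    δ' ∈ RS Φ s := by
  obtain ⟨h0, h1⟩ := h
  refine ⟨h0.trans hle, fun x hx => ?_⟩
  obtain ⟨ha, hb⟩ := h1 x hx
  have hx2 : (0:ℝ) ≤ ∑ j, x j ^ 2 := Finset.sum_nonneg fun j _ => sq_nonneg _
  constructor
  · calc (1 - δ') * ∑ j, x j ^ 2 ≤ (1 - δ) * ∑ j, x j ^ 2 := by nlinarith
      _ ≤ _ := ha
  · calc ∑ i, (Φ.mulVec x i) ^ 2 ≤ (1 + δ) * ∑ j, x j ^ 2 := hb
      _ ≤ (1 + δ') * ∑ j, x j ^ 2 := by nlinarith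

lemma RS_nonempty (Φ : Matrix ι κ ℝ) (s : ℕ) : (RS Φ s).Nonempty := by
  set M : ℝ := ∑ i, ∑ j, Φ i j ^ 2 with hM
  have hM0 : 0 ≤ M := Finset.sum_nonneg fun i _ => Finset.sum_nonneg fun j _ => sq_nonneg _
  refine ⟨max 1 M, le_trans zero_le_one (le_max_left _ _), fun x _ => ?_⟩
  have hx2 : (0:ℝ) ≤ ∑ j, x j ^ 2 := Finset.sum_nonneg fun j _ => sq_nonneg _
  have hΦx : (0:ℝ) ≤ ∑ i, (Φ.mulVec x i) ^ 2 := Finset.sum_nonneg fun i _ => sq_nonneg _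
  constructor
  · have : (1 - max 1 M) ≤ 0 := by
      have := le_max_left 1 M; linarith
    nlinarith
  · have hCS : ∑ i, (Φ.mulVec x i) ^ 2 ≤ M * ∑ j, x j ^ 2 := by
      rw [hM, Finset.sum_mul]
      refine Finset.sum_le_sum fun i _ => ?_
      have := Finset.sum_mul_sq_le_sq_mul_sq Finset.univ (fun j => Φ i j) x
      simpa [mulVec, dotProduct] using this
    have h1 : M ≤ 1 + max 1 M := by
      have := le_max_right 1 M; linarith
    nlinarith

lemma RS_bddBelow (Φ : Matrix ι κ ℝ) (s : ℕ) : BddBelow (RS Φ s) :=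
  ⟨0, fun _ h => h.1⟩

lemma RS_isClosed (Φ : Matrix ι κ ℝ) (s : ℕ) : IsClosed (RS Φ s) := by
  have hrw : RS Φ s = {δ : ℝ | 0 ≤ δ} ∩
      ⋂ (x : κ → ℝ) (_ : (Function.support x).ncard ≤ s),
      ({δ : ℝ | (1 - δ) * ∑ j, x j ^ 2 ≤ ∑ i, (Φ.mulVec x i) ^ 2} ∩
       {δ : ℝ | ∑ i, (Φ.mulVec x i) ^ 2 ≤ (1 + δ) * ∑ j, x j ^ 2}) := by
    ext δ
    simp only [RS, Set.mem_setOf_eq, Set.mem_inter_iff, Set.mem_iInter]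
  rw [hrw]
  refine (isClosed_le continuous_const continuous_id).inter
    (isClosed_iInter fun x => isClosed_iInter fun _ =>
      (isClosed_le (by fun_prop) continuous_const).inter
      (isClosed_le continuous_const (by fun_prop)))

lemma ric_mem_RS (Φ : Matrix ι κ ℝ) (s : ℕ) : ric Φ s ∈ RS Φ s :=
  (RS_isClosed Φ s).csInf_mem (RS_nonempty Φ s) (RS_bddBelow Φ s)

lemma mem_RS_iff {Φ : Matrix ι κ ℝ} {s : ℕ} {δ : ℝ} :
    δ ∈ RS Φ s ↔ ric Φ s ≤ δ :=
  ⟨fun h => csInf_le (RS_bddBelow Φ s) h, fun h => RS_upward (ric_mem_RS Φ s) h⟩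

end Aux

section Block

variable {k : ℕ} {sz : Fin k → ℕ}

lemma sum_sigma_eq (f : (Σ a : Fin k, Fin (sz a)) → ℝ) :
    ∑ p, f p = ∑ a, ∑ i, f ⟨a, i⟩ := by
  rw [← Finset.univ_sigma_univ, Finset.sum_sigma]

lemma mulVec_blockDiagonal'_apply (B : ∀ a : Fin k, Matrix (Fin (sz a)) (Fin (sz a)) ℝ)
    (x : (Σ a : Fin k, Fin (sz a)) → ℝ) (a : Fin k) (i : Fin (sz a)) :
    (blockDiagonal' B).mulVec x ⟨a, i⟩ = (B a).mulVec (fun j => x ⟨a, j⟩) i := by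
  simp only [mulVec, dotProduct]
  rw [← Finset.univ_sigma_univ, Finset.sum_sigma]
  rw [Fintype.sum_eq_single a]
  · simp [blockDiagonal'_apply_eq]
  · intro c hc
    refine Finset.sum_eq_zero fun j _ => ?_
    rw [blockDiagonal'_apply_ne _ _ _ (fun h => hc h.symm), zero_mul]

lemma ncard_support_restrict (x : (Σ a : Fin k, Fin (sz a)) → ℝ) (a : Fin k) :
    (Function.support fun i => x ⟨a, i⟩).ncard ≤ (Function.support x).ncard := by
  have hsub : (Sigma.mk a) '' (Function.support fun i => x ⟨a, i⟩) ⊆ Function.support x := by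
    rintro _ ⟨i, hi, rfl⟩; exact hi
  calc (Function.support fun i => x ⟨a, i⟩).ncard
      = ((Sigma.mk a) '' (Function.support fun i => x ⟨a, i⟩)).ncard :=
        (Set.ncard_image_of_injective (Function.support fun i => x ⟨a, i⟩) (sigma_mk_injective (β := fun c => Fin (sz c)))).symm
    _ ≤ _ := Set.ncard_le_ncard hsub (Set.toFinite _)

lemma mem_RS_blockDiagonal_iff (B : ∀ a : Fin k, Matrix (Fin (sz a)) (Fin (sz a)) ℝ)
    (s : ℕ) (a₀ : Fin k) {δ : ℝ} :
    δ ∈ RS (blockDiagonal' B) s ↔ ∀ a, δ ∈ RS (B a) s := by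
  constructor
  · rintro ⟨h0, h1⟩ a
    refine ⟨h0, fun y hy => ?_⟩
    set x : (Σ c : Fin k, Fin (sz c)) → ℝ :=
      fun p => if h : p.1 = a then y (Fin.cast (congrArg sz h) p.2) else 0 with hxdef
    have hxa : ∀ i : Fin (sz a), x ⟨a, i⟩ = y i := by
      intro i; simp [hxdef]
    have hxc : ∀ c : Fin k, c ≠ a → ∀ i : Fin (sz c), x ⟨c, i⟩ = 0 := by
      intro c hc i; simp [hxdef, hc]
    have hsupp : Function.support x ⊆ (Sigma.mk a) '' (Function.support y) := by
      rintro ⟨c, i⟩ hp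
      rcases eq_or_ne c a with rfl | hc
      · exact ⟨i, by simpa [hxa] using hp, rfl⟩
      · exact absurd (hxc c hc i) hp
    have hcard : (Function.support x).ncard ≤ s := by
      calc (Function.support x).ncard
          ≤ ((Sigma.mk a) '' (Function.support y)).ncard :=
            Set.ncard_le_ncard hsupp (Set.toFinite _)
        _ = (Function.support y).ncard := Set.ncard_image_of_injective _ sigma_mk_injective
        _ ≤ s := hy
    have hxsum : ∑ p, x p ^ 2 = ∑ i, y i ^ 2 := by
      rw [sum_sigma_eq]
      rw [Fintype.sum_eq_single a]
      · exact Finset.sum_congr rfl fun i _ => by rw [hxa]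
      · intro c hc
        exact Finset.sum_eq_zero fun i _ => by rw [hxc c hc i]; ring
    have hrestrict : ∀ c : Fin k, c ≠ a → (fun j => x ⟨c, j⟩) = (0 : Fin (sz c) → ℝ) := by
      intro c hc; funext j; exact hxc c hc j
    have hΦsum : ∑ p, ((blockDiagonal' B).mulVec x p) ^ 2 = ∑ i, ((B a).mulVec y i) ^ 2 := by
      rw [sum_sigma_eq]
      rw [Fintype.sum_eq_single a]
      · refine Finset.sum_congr rfl fun i _ => ?_
        rw [mulVec_blockDiagonal'_apply]
        congr 1
        congr 1
        funext j; exact hxa j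
      · intro c hc
        refine Finset.sum_eq_zero fun i _ => ?_
        rw [mulVec_blockDiagonal'_apply, hrestrict c hc, mulVec_zero]
        simp
    have := h1 x hcard
    rw [hxsum, hΦsum] at this
    exact this
  · intro h
    refine ⟨(h a₀).1, fun x hx => ?_⟩
    have hblock : ∀ a : Fin k,
        (1 - δ) * ∑ i, x ⟨a, i⟩ ^ 2 ≤ ∑ i, ((B a).mulVec (fun j => x ⟨a, j⟩) i) ^ 2 ∧
        ∑ i, ((B a).mulVec (fun j => x ⟨a, j⟩) i) ^ 2 ≤ (1 + δ) * ∑ i, x ⟨a, i⟩ ^ 2 :=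
      fun a => (h a).2 _ ((ncard_support_restrict x a).trans hx)
    have hxsum : ∑ p, x p ^ 2 = ∑ a, ∑ i, x ⟨a, i⟩ ^ 2 := sum_sigma_eq _
    have hΦsum : ∑ p, ((blockDiagonal' B).mulVec x p) ^ 2 =
        ∑ a, ∑ i, ((B a).mulVec (fun j => x ⟨a, j⟩) i) ^ 2 := by
      rw [sum_sigma_eq]
      exact Finset.sum_congr rfl fun a _ => Finset.sum_congr rfl fun i _ => by
        rw [mulVec_blockDiagonal'_apply]
    rw [hxsum, hΦsum, Finset.mul_sum, Finset.mul_sum]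
    exact ⟨Finset.sum_le_sum fun a _ => (hblock a).1,
           Finset.sum_le_sum fun a _ => (hblock a).2⟩

end Block

/-- For a block-diagonal matrix with diagonal blocks
`B 0, …, B (k-1)`, the `s`-restricted isometry constant equals the maximum of the
`s`-restricted isometry constants of the blocks. -/
theorem ric_blockDiagonal (k : ℕ) (hk : 0 < k) (sz : Fin k → ℕ)
    (B : ∀ a : Fin k, Matrix (Fin (sz a)) (Fin (sz a)) ℝ) (s : ℕ) :
    ric (Matrix.blockDiagonal' B) s =
      Finset.univ.sup' ⟨⟨0, hk⟩, Finset.mem_univ _⟩ (fun a => ric (B a) s) := by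
  have key : RS (blockDiagonal' B) s =
      Set.Ici (Finset.univ.sup' ⟨⟨0, hk⟩, Finset.mem_univ _⟩ (fun a => ric (B a) s)) := by
    ext δ
    rw [mem_RS_blockDiagonal_iff B s ⟨0, hk⟩, Set.mem_Ici]
    refine Iff.trans ?_ (Finset.sup'_le_iff _ _).symm
    simp only [Finset.mem_univ, forall_true_left]
    exact forall_congr' fun a => mem_RS_iff
  rw [ric_eq_sInf_RS, key, csInf_Ici]
end

section
/- Let A = A^in + A^out be the decomposition of the adjacency matrix of a graph with positive degrees d_i = d_i^in + d_i^out, let P = A D^{-1} and P^in = A^in (D^in)^{-1}, and let Q be the diagonal matrix with entries q_i = d_i^in/d_i. Then P = P^in Q + A^out D^{-1}, and consequently, for every nonnegative vector x and every t ≥ 1, P^t x ≥ q_min^t (P^in)^t x entrywise, where q_min = min_i q_i. -/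
open Matrix

/-- With `A = A^in + A^out`, degrees `d j = din j + dout j`
(column sums, `din j > 0`), `P = A D⁻¹`, `P^in = A^in (D^in)⁻¹` and the diagonal
matrix `Q` with entries `q j = din j / d j`:
`P = P^in Q + A^out D⁻¹`, and consequently for every nonnegative vector `x`,
every `t ≥ 1` and every coordinate `i`, `q_min^t ((P^in)^t x)_i ≤ (P^t x)_i`. -/
theorem transition_decomposition (n : ℕ) (Ain Aout : Matrix (Fin n) (Fin n) ℝ)
    (hAinn : ∀ i j, 0 ≤ Ain i j) (hAoutn : ∀ i j, 0 ≤ Aout i j)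
    (din dout d q : Fin n → ℝ)
    (hdin : ∀ j, din j = ∑ i, Ain i j) (hdout : ∀ j, dout j = ∑ i, Aout i j)
    (hd : ∀ j, d j = din j + dout j) (hdinpos : ∀ j, 0 < din j)
    (hq : ∀ j, q j = din j / d j)
    (qmin : ℝ) (hqmin : ∀ j, qmin ≤ q j) (hqmin0 : 0 ≤ qmin) :
    (Ain + Aout) * Matrix.diagonal (fun j => (d j)⁻¹) =
      (Ain * Matrix.diagonal fun j => (din j)⁻¹) * Matrix.diagonal q +
        Aout * Matrix.diagonal (fun j => (d j)⁻¹) ∧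
    ∀ x : Fin n → ℝ, (∀ i, 0 ≤ x i) → ∀ t : ℕ, 1 ≤ t → ∀ i,
      qmin ^ t * (((Ain * Matrix.diagonal fun j => (din j)⁻¹) ^ t).mulVec x i) ≤
        (((Ain + Aout) * Matrix.diagonal fun j => (d j)⁻¹) ^ t).mulVec x i := by
  have hdpos : ∀ j, 0 < d j := by
    intro j
    have h1 := hdinpos j
    have h2 : 0 ≤ dout j := by
      rw [hdout]; exact Finset.sum_nonneg fun i _ => hAoutn i j
    rw [hd]; linarith
  set Pin := Ain * Matrix.diagonal fun j => (din j)⁻¹ with hPin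
  set P := (Ain + Aout) * Matrix.diagonal fun j => (d j)⁻¹ with hP
  have hPinEntry : ∀ i j, Pin i j = Ain i j * (din j)⁻¹ := fun i j => by
    rw [hPin, Matrix.mul_diagonal]
  have hPEntry : ∀ i j, P i j = (Ain i j + Aout i j) * (d j)⁻¹ := fun i j => by
    rw [hP, Matrix.mul_diagonal]; simp
  have hPinNonneg : ∀ i j, 0 ≤ Pin i j := fun i j => by
    rw [hPinEntry]
    exact mul_nonneg (hAinn i j) (inv_nonneg.mpr (le_of_lt (hdinpos j)))
  have hqPin : ∀ i j, q j * Pin i j = Ain i j * (d j)⁻¹ := fun i j => by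
    rw [hPinEntry, hq]
    have h1 : din j ≠ 0 := ne_of_gt (hdinpos j)
    have h2 : d j ≠ 0 := ne_of_gt (hdpos j)
    field_simp
  have hkey : ∀ i j, qmin * Pin i j ≤ P i j := fun i j => by
    calc qmin * Pin i j ≤ q j * Pin i j :=
          mul_le_mul_of_nonneg_right (hqmin j) (hPinNonneg i j)
      _ = Ain i j * (d j)⁻¹ := hqPin i j
      _ ≤ P i j := by
          rw [hPEntry]
          have : 0 ≤ Aout i j * (d j)⁻¹ :=
            mul_nonneg (hAoutn i j) (inv_nonneg.mpr (le_of_lt (hdpos j)))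
          nlinarith
  constructor
  · ext i j
    show P i j = _
    rw [Matrix.add_apply, Matrix.mul_diagonal, Matrix.mul_diagonal, hPEntry,
      mul_comm (Pin i j) (q j), hqPin]
    ring
  · intro x hx t _ i
    have main : ∀ t : ℕ, (∀ i, 0 ≤ (Pin ^ t).mulVec x i) ∧
        ∀ i, qmin ^ t * (Pin ^ t).mulVec x i ≤ (P ^ t).mulVec x i := by
      intro t
      induction t with
      | zero => simpa using fun i => hx i
      | succ t ih =>
        obtain ⟨ihn, ihle⟩ := ih
        have hrecPin : ∀ i, (Pin ^ (t + 1)).mulVec x i =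
            ∑ j, Pin i j * (Pin ^ t).mulVec x j := fun i => by
          rw [pow_succ', ← Matrix.mulVec_mulVec]
          simp [Matrix.mulVec, dotProduct]
        have hrecP : ∀ i, (P ^ (t + 1)).mulVec x i =
            ∑ j, P i j * (P ^ t).mulVec x j := fun i => by
          rw [pow_succ', ← Matrix.mulVec_mulVec]
          simp [Matrix.mulVec, dotProduct]
        constructor
        · intro i
          rw [hrecPin]
          exact Finset.sum_nonneg fun j _ => mul_nonneg (hPinNonneg i j) (ihn j)
        · intro i
          rw [hrecPin, hrecP, Finset.mul_sum]
          refine Finset.sum_le_sum fun j _ => ?_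
          have h1 : qmin ^ (t + 1) * (Pin i j * (Pin ^ t).mulVec x j) =
              (qmin * Pin i j) * (qmin ^ t * (Pin ^ t).mulVec x j) := by ring
          rw [h1]
          exact mul_le_mul (hkey i j) (ihle j)
            (mul_nonneg (pow_nonneg hqmin0 t) (ihn j))
            (le_trans (mul_nonneg hqmin0 (hPinNonneg i j)) (hkey i j))
    exact (main t).2 i
end

section
/- Let G be a graph with vertex set V, C ⊂ V, and decomposition A = A^in + A^out where A^in contains edges within C and within V\C and A^out contains edges between C and V\C. Suppose d_j^out ≤ ε d_j for all j. Let v^(0) = D 1_Γ with Γ ⊂ C and v^(t) = P^t v^(0) where P = A D^{-1}. Then the ℓ1-mass of v^(t) outside C satisfies ‖v^(t)|_{V\C}‖_1 ≤ t·ε·vol(Γ). -/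
open Matrix

/-- Let `C ⊆ V` and `A = A^in + A^out`, where `A^in` only
contains edges within `C` or within `V \ C`, and `A^out` only edges between `C`
and `V \ C` (all entries nonnegative).  Suppose `d_j^out ≤ ε d_j` for all `j`,
where `d j > 0` is the (column) degree.  Let `v⁽⁰⁾ = D 1_Γ` with `Γ ⊆ C` and
`v⁽ᵗ⁾ = Pᵗ v⁽⁰⁾` with `P = A D⁻¹`.  Then `‖v⁽ᵗ⁾|_{V \ C}‖₁ ≤ t ε vol(Γ)`. -/
theorem diffusion_leakage (n : ℕ) (C : Finset (Fin n))
    (Ain Aout : Matrix (Fin n) (Fin n) ℝ)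
    (hAinn : ∀ i j, 0 ≤ Ain i j) (hAoutn : ∀ i j, 0 ≤ Aout i j)
    (hAin : ∀ i j, ¬(i ∈ C ↔ j ∈ C) → Ain i j = 0)
    (hAout : ∀ i j, (i ∈ C ↔ j ∈ C) → Aout i j = 0)
    (d : Fin n → ℝ) (hd : ∀ j, d j = ∑ i, (Ain + Aout) i j)
    (hdpos : ∀ j, 0 < d j)
    (ε : ℝ) (hε : ∀ j, ∑ i, Aout i j ≤ ε * d j)
    (Γ : Finset (Fin n)) (hΓ : Γ ⊆ C) (t : ℕ) :
    ∑ i ∈ Finset.univ \ C,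
        |((((Ain + Aout) * Matrix.diagonal fun j => (d j)⁻¹) ^ t).mulVec
          (fun i => if i ∈ Γ then d i else 0)) i| ≤
      (t : ℝ) * ε * ∑ i ∈ Γ, d i := by
  rcases Nat.eq_zero_or_pos n with hn | hn
  · subst hn
    simp [Finset.eq_empty_of_isEmpty Γ]
  have hε0 : 0 ≤ ε := by
    have j : Fin n := ⟨0, hn⟩
    have h1 : (0:ℝ) ≤ ∑ i, Aout i j := Finset.sum_nonneg fun i _ => hAoutn i j
    have h2 := hε j
    nlinarith [hdpos j]
  set A : Matrix (Fin n) (Fin n) ℝ := Ain + Aout with hA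
  have hAnn : ∀ i j, 0 ≤ A i j := fun i j => add_nonneg (hAinn i j) (hAoutn i j)
  set P : Matrix (Fin n) (Fin n) ℝ := A * Matrix.diagonal fun j => (d j)⁻¹ with hP
  set v : ℕ → Fin n → ℝ := fun t => (P ^ t).mulVec (fun i => if i ∈ Γ then d i else 0) with hv
  have hvsucc : ∀ s i, v (s+1) i = ∑ j, A i j * (d j)⁻¹ * v s j := by
    intro s i
    have : v (s+1) = P.mulVec (v s) := by
      simp only [hv, pow_succ']
      rw [Matrix.mulVec_mulVec]
    rw [this]
    simp only [Matrix.mulVec, dotProduct, hP, Matrix.mul_diagonal]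
  -- nonnegativity
  have hvnn : ∀ s i, 0 ≤ v s i := by
    intro s
    induction s with
    | zero =>
      intro i
      simp only [hv, pow_zero, Matrix.one_mulVec]
      split <;> [exact (hdpos i).le; rfl]
    | succ s ih =>
      intro i
      rw [hvsucc]
      exact Finset.sum_nonneg fun j _ =>
        mul_nonneg (mul_nonneg (hAnn i j) (inv_nonneg.2 (hdpos j).le)) (ih j)
  -- total mass conservation
  have hcolsum : ∀ j, ∑ i, A i j = d j := fun j => (hd j).symm
  have hvsum : ∀ s, ∑ i, v s i = ∑ i ∈ Γ, d i := by
    intro s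
    induction s with
    | zero =>
      simp only [hv, pow_zero, Matrix.one_mulVec]
      simp [Finset.sum_ite_mem]
    | succ s ih =>
      rw [← ih]
      simp only [hvsucc]
      rw [Finset.sum_comm]
      refine Finset.sum_congr rfl fun j _ => ?_
      rw [← Finset.sum_mul, ← Finset.sum_mul, hcolsum j,
        mul_inv_cancel₀ (hdpos j).ne', one_mul]
  have hvol0 : 0 ≤ ∑ i ∈ Γ, d i := Finset.sum_nonneg fun i _ => (hdpos i).le
  -- main induction
  have main : ∀ s, ∑ i ∈ Finset.univ \ C, v s i ≤ (s : ℝ) * ε * ∑ i ∈ Γ, d i := by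
    intro s
    induction s with
    | zero =>
      have : ∀ i ∈ Finset.univ \ C, v 0 i = 0 := by
        intro i hi
        rw [Finset.mem_sdiff] at hi
        simp only [hv, pow_zero, Matrix.one_mulVec]
        rw [if_neg (fun h => hi.2 (hΓ h))]
      rw [Finset.sum_congr rfl this]
      simp
    | succ s ih =>
      have step : ∑ i ∈ Finset.univ \ C, v (s+1) i
          ≤ ε * (∑ i ∈ Γ, d i) + ∑ j ∈ Finset.univ \ C, v s j := by
        have hswap : ∑ i ∈ Finset.univ \ C, v (s+1) i
            = ∑ j, (∑ i ∈ Finset.univ \ C, A i j) * (d j)⁻¹ * v s j := by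
          simp only [hvsucc]
          rw [Finset.sum_comm]
          refine Finset.sum_congr rfl fun j _ => ?_
          rw [← Finset.sum_mul, ← Finset.sum_mul]
        rw [hswap]
        rw [← Finset.sum_sdiff (Finset.subset_univ C)]
        have h1 : ∑ j ∈ C, (∑ i ∈ Finset.univ \ C, A i j) * (d j)⁻¹ * v s j
            ≤ ε * (∑ i ∈ Γ, d i) := by
          have hb : ∀ j ∈ C, (∑ i ∈ Finset.univ \ C, A i j) * (d j)⁻¹ * v s j
              ≤ ε * v s j := by
            intro j hj
            have hAin0 : ∀ i ∈ Finset.univ \ C, A i j = Aout i j := by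
              intro i hi
              rw [Finset.mem_sdiff] at hi
              have : Ain i j = 0 := hAin i j (by tauto)
              simp [hA, Matrix.add_apply, this]
            rw [Finset.sum_congr rfl hAin0]
            have hle : ∑ i ∈ Finset.univ \ C, Aout i j ≤ ε * d j :=
              le_trans (Finset.sum_le_sum_of_subset_of_nonneg (Finset.subset_univ _)
                (fun i _ _ => hAoutn i j)) (hε j)
            have h2 : (∑ i ∈ Finset.univ \ C, Aout i j) * (d j)⁻¹ ≤ ε := by
              calc (∑ i ∈ Finset.univ \ C, Aout i j) * (d j)⁻¹
                  ≤ ε * d j * (d j)⁻¹ := by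
                    exact mul_le_mul_of_nonneg_right hle (inv_nonneg.2 (hdpos j).le)
                _ = ε * (d j * (d j)⁻¹) := by ring
                _ = ε := by rw [mul_inv_cancel₀ (hdpos j).ne', mul_one]
            exact mul_le_mul_of_nonneg_right h2 (hvnn s j)
          calc ∑ j ∈ C, (∑ i ∈ Finset.univ \ C, A i j) * (d j)⁻¹ * v s j
              ≤ ∑ j ∈ C, ε * v s j := Finset.sum_le_sum hb
            _ = ε * ∑ j ∈ C, v s j := by rw [Finset.mul_sum]
            _ ≤ ε * ∑ i ∈ Γ, d i := by
                refine mul_le_mul_of_nonneg_left ?_ hε0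
                rw [← hvsum s]
                exact Finset.sum_le_sum_of_subset_of_nonneg (Finset.subset_univ _)
                  (fun i _ _ => hvnn s i)
        have h2 : ∑ j ∈ Finset.univ \ C, (∑ i ∈ Finset.univ \ C, A i j) * (d j)⁻¹ * v s j
            ≤ ∑ j ∈ Finset.univ \ C, v s j := by
          refine Finset.sum_le_sum fun j hj => ?_
          have hle : ∑ i ∈ Finset.univ \ C, A i j ≤ d j := by
            rw [← hcolsum j]
            exact Finset.sum_le_sum_of_subset_of_nonneg (Finset.subset_univ _)
              (fun i _ _ => hAnn i j)
          have hb : (∑ i ∈ Finset.univ \ C, A i j) * (d j)⁻¹ ≤ 1 := by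
            rw [← mul_inv_cancel₀ (hdpos j).ne']
            exact mul_le_mul_of_nonneg_right hle (inv_nonneg.2 (hdpos j).le)
          calc (∑ i ∈ Finset.univ \ C, A i j) * (d j)⁻¹ * v s j
              ≤ 1 * v s j := mul_le_mul_of_nonneg_right hb (hvnn s j)
            _ = v s j := one_mul _
        linarith
      calc ∑ i ∈ Finset.univ \ C, v (s+1) i
          ≤ ε * (∑ i ∈ Γ, d i) + ∑ j ∈ Finset.univ \ C, v s j := step
        _ ≤ ε * (∑ i ∈ Γ, d i) + (s : ℝ) * ε * ∑ i ∈ Γ, d i := by linarith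
        _ = ((s+1 : ℕ) : ℝ) * ε * ∑ i ∈ Γ, d i := by push_cast; ring
  calc ∑ i ∈ Finset.univ \ C,
        |((((Ain + Aout) * Matrix.diagonal fun j => (d j)⁻¹) ^ t).mulVec
          (fun i => if i ∈ Γ then d i else 0)) i|
      = ∑ i ∈ Finset.univ \ C, v t i := by
        refine Finset.sum_congr rfl fun i _ => ?_
        exact abs_of_nonneg (hvnn t i)
    _ ≤ (t : ℝ) * ε * ∑ i ∈ Γ, d i := main t
end

section
/- Suppose Φ = Φ̂ + M are matrices with s-restricted isometry constants δ_s(Φ) and δ̂_s = δ_s(Φ̂), and let ε_Φ^s = ‖M‖_2^{(s)} / ‖Φ̂‖_2^{(s)} where ‖B‖_2^{(s)} = max_{|S|=s} ‖B_S‖_2. Then δ_s(Φ) ≤ (1 + δ̂_s)(1 + ε_Φ^s)² − 1. -/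
open Matrix

/-- The spectral norm (ℓ²-operator norm) of a real matrix. -/
noncomputable def opNorm {ι κ : Type*} [Fintype ι] [Fintype κ] [DecidableEq κ]
    (B : Matrix ι κ ℝ) : ℝ :=
  ‖LinearMap.toContinuousLinearMap (Matrix.toEuclideanLin B)‖

/-- `‖B‖₂^{(s)}`: the maximum spectral norm over column submatrices on `s` columns. -/
noncomputable def colOpNorm {m n : ℕ} (B : Matrix (Fin m) (Fin n) ℝ) (s : ℕ) : ℝ :=
  sSup {c : ℝ | ∃ S : Finset (Fin n), S.card = s ∧
    c = opNorm (B.submatrix id (Subtype.val : {j // j ∈ S} → Fin n))}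

noncomputable def enorm2 {ι : Type*} [Fintype ι] (v : ι → ℝ) : ℝ := Real.sqrt (∑ i, v i ^ 2)

lemma enorm_nonneg {ι : Type*} [Fintype ι] (v : ι → ℝ) : 0 ≤ enorm2 v := Real.sqrt_nonneg _

lemma enorm_sq {ι : Type*} [Fintype ι] (v : ι → ℝ) : enorm2 v ^ 2 = ∑ i, v i ^ 2 :=
  Real.sq_sqrt (Finset.sum_nonneg fun _ _ => sq_nonneg _)

lemma enorm_eq_norm {ι : Type*} [Fintype ι] (v : ι → ℝ) :
    enorm2 v = ‖(WithLp.equiv 2 (ι → ℝ)).symm v‖ := by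
  rw [EuclideanSpace.norm_eq]
  simp only [enorm2, WithLp.equiv_symm_apply, Real.norm_eq_abs, sq_abs]

lemma enorm2_add_le {ι : Type*} [Fintype ι] (v w : ι → ℝ) :
    enorm2 (v + w) ≤ enorm2 v + enorm2 w := by
  rw [enorm_eq_norm, enorm_eq_norm, enorm_eq_norm]
  have : (WithLp.equiv 2 (ι → ℝ)).symm (v + w)
      = (WithLp.equiv 2 (ι → ℝ)).symm v + (WithLp.equiv 2 (ι → ℝ)).symm w := rfl
  rw [this]; exact norm_add_le _ _

lemma enorm2_neg {ι : Type*} [Fintype ι] (v : ι → ℝ) : enorm2 (-v) = enorm2 v := by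
  simp [enorm2]

lemma enorm_mulVec_le {ι κ : Type*} [Fintype ι] [Fintype κ] [DecidableEq κ]
    (B : Matrix ι κ ℝ) (x : κ → ℝ) :
    enorm2 (B.mulVec x) ≤ opNorm B * enorm2 x := by
  rw [enorm_eq_norm, enorm_eq_norm]
  have h := ContinuousLinearMap.le_opNorm
      (LinearMap.toContinuousLinearMap (Matrix.toEuclideanLin B))
      ((WithLp.equiv 2 (κ → ℝ)).symm x)
  simpa [opNorm, WithLp.equiv_symm_apply, Matrix.toEuclideanLin_apply_piLp_toLp] using h

lemma mulVec_sub_eq {m n : ℕ} (B : Matrix (Fin m) (Fin n) ℝ) (S : Finset (Fin n))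
    (x : Fin n → ℝ) (hx : ∀ j ∉ S, x j = 0) :
    (B.submatrix id (Subtype.val : {j // j ∈ S} → Fin n)).mulVec (fun j => x j.val)
      = B.mulVec x := by
  funext i
  simp only [mulVec, dotProduct, submatrix_apply, id_eq]
  rw [Finset.univ_eq_attach, Finset.sum_attach S (fun j => B i j * x j)]
  exact Finset.sum_subset (Finset.subset_univ S)
    (fun j _ hj => by rw [hx j hj, mul_zero])

lemma sum_sq_sub_eq {n : ℕ} (S : Finset (Fin n)) (x : Fin n → ℝ)
    (hx : ∀ j ∉ S, x j = 0) :
    ∑ j : {j // j ∈ S}, x j.val ^ 2 = ∑ j, x j ^ 2 := by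
  rw [Finset.univ_eq_attach, Finset.sum_attach S (fun j => x j ^ 2)]
  exact Finset.sum_subset (Finset.subset_univ S)
    (fun j _ hj => by rw [hx j hj]; ring)

def colSet {m n : ℕ} (B : Matrix (Fin m) (Fin n) ℝ) (s : ℕ) : Set ℝ :=
  {c : ℝ | ∃ S : Finset (Fin n), S.card = s ∧
    c = opNorm (B.submatrix id (Subtype.val : {j // j ∈ S} → Fin n))}

lemma colOpNorm_eq {m n : ℕ} (B : Matrix (Fin m) (Fin n) ℝ) (s : ℕ) :
    colOpNorm B s = sSup (colSet B s) := rfl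

lemma colSet_bdd {m n : ℕ} (B : Matrix (Fin m) (Fin n) ℝ) (s : ℕ) :
    BddAbove (colSet B s) := by
  have hsub : colSet B s ⊆
      (fun S : Finset (Fin n) =>
        opNorm (B.submatrix id (Subtype.val : {j // j ∈ S} → Fin n))) '' Set.univ := by
    rintro c ⟨S, _, rfl⟩; exact ⟨S, trivial, rfl⟩
  exact (Set.finite_univ.image _).bddAbove.mono hsub

lemma colSet_nonempty {m n : ℕ} (B : Matrix (Fin m) (Fin n) ℝ) (s : ℕ) (hsn : s ≤ n) :
    (colSet B s).Nonempty := by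
  obtain ⟨S, -, hcard⟩ := Finset.exists_subset_card_eq
    (show s ≤ (Finset.univ : Finset (Fin n)).card by simpa using hsn)
  exact ⟨_, S, hcard, rfl⟩

lemma opNorm_nonneg {ι κ : Type*} [Fintype ι] [Fintype κ] [DecidableEq κ]
    (B : Matrix ι κ ℝ) : 0 ≤ opNorm B := norm_nonneg _

lemma le_colOpNorm {m n : ℕ} (B : Matrix (Fin m) (Fin n) ℝ) (s : ℕ)
    (S : Finset (Fin n)) (hcard : S.card = s) :
    opNorm (B.submatrix id (Subtype.val : {j // j ∈ S} → Fin n)) ≤ colOpNorm B s :=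
  le_csSup (colSet_bdd B s) ⟨S, hcard, rfl⟩

lemma colOpNorm_nonneg {m n : ℕ} (B : Matrix (Fin m) (Fin n) ℝ) (s : ℕ) (hsn : s ≤ n) :
    0 ≤ colOpNorm B s := by
  obtain ⟨c, S, hcard, rfl⟩ := colSet_nonempty B s hsn
  exact le_trans (opNorm_nonneg _) (le_colOpNorm B s S hcard)

lemma enorm_mulVec_sparse {m n s : ℕ} (hsn : s ≤ n) (B : Matrix (Fin m) (Fin n) ℝ)
    (x : Fin n → ℝ) (hx : (Function.support x).ncard ≤ s) :
    enorm2 (B.mulVec x) ≤ colOpNorm B s * enorm2 x := by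
  classical
  set F := (Function.support x).toFinset with hF
  have hFcard : F.card ≤ s := by
    rw [hF, ← Set.ncard_eq_toFinset_card']; exact hx
  obtain ⟨T, hFT, -, hTcard⟩ := Finset.exists_subsuperset_card_eq (F.subset_univ) hFcard
    (by simpa using hsn)
  have hx0 : ∀ j ∉ T, x j = 0 := by
    intro j hj
    by_contra h
    exact hj (hFT (by simpa [hF, Function.mem_support] using h))
  calc enorm2 (B.mulVec x)
      = enorm2 ((B.submatrix id (Subtype.val : {j // j ∈ T} → Fin n)).mulVec
          (fun j => x j.val)) := by rw [mulVec_sub_eq _ _ _ hx0]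
    _ ≤ opNorm (B.submatrix id (Subtype.val : {j // j ∈ T} → Fin n)) *
          enorm2 (fun j : {j // j ∈ T} => x j.val) := enorm_mulVec_le _ _
    _ = opNorm (B.submatrix id (Subtype.val : {j // j ∈ T} → Fin n)) * enorm2 x := by
          unfold enorm2; rw [sum_sq_sub_eq _ _ hx0]
    _ ≤ colOpNorm B s * enorm2 x :=
          mul_le_mul_of_nonneg_right (le_colOpNorm B s T hTcard) (enorm_nonneg _)

lemma colOpNorm_le_of {m n s : ℕ} (hsn : s ≤ n) (B : Matrix (Fin m) (Fin n) ℝ)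
    (C : ℝ) (hC : 0 ≤ C)
    (h : ∀ x : Fin n → ℝ, (Function.support x).ncard ≤ s →
      ∑ i, (B.mulVec x i) ^ 2 ≤ C * ∑ j, x j ^ 2) :
    colOpNorm B s ≤ Real.sqrt C := by
  classical
  rw [colOpNorm_eq]
  apply csSup_le (colSet_nonempty B s hsn)
  rintro c ⟨S, hcard, rfl⟩
  apply ContinuousLinearMap.opNorm_le_bound _ (Real.sqrt_nonneg C)
  intro y
  set y' : {j // j ∈ S} → ℝ := WithLp.equiv 2 _ y with hy'
  set x : Fin n → ℝ := fun j => if h : j ∈ S then y' ⟨j, h⟩ else 0 with hxdef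
  have hx0 : ∀ j ∉ S, x j = 0 := fun j hj => dif_neg hj
  have hxy : (fun j : {j // j ∈ S} => x j.val) = y' := funext fun j => dif_pos j.2
  have hsupp : (Function.support x).ncard ≤ s := by
    have hss : Function.support x ⊆ ↑S := by
      intro j hj
      by_contra hc
      exact hj (hx0 j hc)
    calc (Function.support x).ncard ≤ (↑S : Set (Fin n)).ncard :=
          Set.ncard_le_ncard hss (S.finite_toSet)
      _ = S.card := Set.ncard_coe_finset S
      _ = s := hcard
  have h1 : ‖LinearMap.toContinuousLinearMap
      (Matrix.toEuclideanLin (B.submatrix id (Subtype.val : {j // j ∈ S} → Fin n))) y‖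
      = enorm2 (B.mulVec x) := by
    have : (LinearMap.toContinuousLinearMap
        (Matrix.toEuclideanLin (B.submatrix id (Subtype.val : {j // j ∈ S} → Fin n)))) y
        = (WithLp.equiv 2 (Fin m → ℝ)).symm
            ((B.submatrix id (Subtype.val : {j // j ∈ S} → Fin n)).mulVec y') := rfl
    rw [this, ← enorm_eq_norm, ← hxy, mulVec_sub_eq _ _ _ hx0]
  have h2 : ‖y‖ = enorm2 x := by
    have : ‖y‖ = enorm2 y' := by
      rw [enorm_eq_norm]; congr 1
    rw [this]
    unfold enorm2
    congr 1
    rw [← hxy, sum_sq_sub_eq _ _ hx0]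
  rw [h1, h2]
  have key := h x hsupp
  calc enorm2 (B.mulVec x) = Real.sqrt (∑ i, (B.mulVec x i) ^ 2) := rfl
    _ ≤ Real.sqrt (C * ∑ j, x j ^ 2) := Real.sqrt_le_sqrt key
    _ = Real.sqrt C * enorm2 x := by rw [Real.sqrt_mul hC]; rfl

def ricSet {ι κ : Type*} [Fintype ι] [Fintype κ] (Φ : Matrix ι κ ℝ) (s : ℕ) : Set ℝ :=
  {δ : ℝ | 0 ≤ δ ∧ ∀ x : κ → ℝ, (Function.support x).ncard ≤ s →
    (1 - δ) * ∑ j, x j ^ 2 ≤ ∑ i, (Φ.mulVec x i) ^ 2 ∧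
    ∑ i, (Φ.mulVec x i) ^ 2 ≤ (1 + δ) * ∑ j, x j ^ 2}

lemma ric_eq {ι κ : Type*} [Fintype ι] [Fintype κ] (Φ : Matrix ι κ ℝ) (s : ℕ) :
    ric Φ s = sInf (ricSet Φ s) := rfl

lemma ricSet_bddBelow {ι κ : Type*} [Fintype ι] [Fintype κ] (Φ : Matrix ι κ ℝ) (s : ℕ) :
    BddBelow (ricSet Φ s) := ⟨0, fun _ hδ => hδ.1⟩

lemma ricSet_nonempty {m n s : ℕ} (hsn : s ≤ n) (B : Matrix (Fin m) (Fin n) ℝ) :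
    (ricSet B s).Nonempty := by
  refine ⟨1 + (colOpNorm B s) ^ 2, ⟨by positivity, fun x hx => ⟨?_, ?_⟩⟩⟩
  · have h1 : (0:ℝ) ≤ ∑ j, x j ^ 2 := Finset.sum_nonneg fun _ _ => sq_nonneg _
    have h2 : (0:ℝ) ≤ ∑ i, (B.mulVec x i) ^ 2 := Finset.sum_nonneg fun _ _ => sq_nonneg _
    nlinarith [sq_nonneg (colOpNorm B s)]
  · have hK := enorm_mulVec_sparse hsn B x hx
    have hK0 := colOpNorm_nonneg B s hsn
    have ha0 := enorm_nonneg x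
    have ht0 := enorm_nonneg (B.mulVec x)
    have ht2 := enorm_sq (B.mulVec x)
    have ha2 := enorm_sq x
    nlinarith [mul_self_le_mul_self ht0 hK]

lemma ric_nonneg {m n s : ℕ} (hsn : s ≤ n) (B : Matrix (Fin m) (Fin n) ℝ) :
    0 ≤ ric B s :=
  le_csInf (ricSet_nonempty hsn B) (fun _ hδ => hδ.1)

lemma ric_bounds {m n s : ℕ} (hsn : s ≤ n) (B : Matrix (Fin m) (Fin n) ℝ)
    (x : Fin n → ℝ) (hx : (Function.support x).ncard ≤ s) :
    (1 - ric B s) * ∑ j, x j ^ 2 ≤ ∑ i, (B.mulVec x i) ^ 2 ∧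
    ∑ i, (B.mulVec x i) ^ 2 ≤ (1 + ric B s) * ∑ j, x j ^ 2 := by
  set A := ∑ j, x j ^ 2 with hA
  set P := ∑ i, (B.mulVec x i) ^ 2 with hP
  have hA0 : 0 ≤ A := Finset.sum_nonneg fun _ _ => sq_nonneg _
  have key : ∀ η : ℝ, 0 < η →
      (1 - (ric B s + η)) * A ≤ P ∧ P ≤ (1 + (ric B s + η)) * A := by
    intro η hη
    obtain ⟨δ, hδmem, hδlt⟩ := exists_lt_of_csInf_lt (ricSet_nonempty hsn B)
      (show sInf (ricSet B s) < ric B s + η from lt_add_of_pos_right _ hη)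
    obtain ⟨h1, h2⟩ := hδmem.2 x hx
    constructor <;> nlinarith
  constructor
  · by_contra h
    push_neg at h
    set η := ((1 - ric B s) * A - P) / (A + 1) with hηdef
    have hη : 0 < η := div_pos (by linarith) (by linarith)
    have hη2 : η * (A + 1) = (1 - ric B s) * A - P :=
      div_mul_cancel₀ _ (by linarith)
    have := (key η hη).1
    nlinarith
  · by_contra h
    push_neg at h
    set η := (P - (1 + ric B s) * A) / (A + 1) with hηdef
    have hη : 0 < η := div_pos (by linarith) (by linarith)
    have hη2 : η * (A + 1) = P - (1 + ric B s) * A :=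
      div_mul_cancel₀ _ (by linarith)
    have := (key η hη).2
    nlinarith

lemma le_of_sq_le_sq' {x y : ℝ} (hx : 0 ≤ x) (hy : 0 ≤ y) (h : x ^ 2 ≤ y ^ 2) : x ≤ y := by
  nlinarith

lemma sq_le_sq_of_le {t y : ℝ} (h0 : 0 ≤ t) (h : t ≤ y) : t ^ 2 ≤ y ^ 2 := by nlinarith

lemma aux_bεv {b c v ε : ℝ} (hεc : ε * c = b) (hcv : c ≤ v) (hε0 : 0 ≤ ε) : b ≤ ε * v := by
  nlinarith

lemma aux_δ0 {r ε : ℝ} (hr0 : 0 ≤ r) (hε0 : 0 ≤ ε) : 0 ≤ (1 + r) * (1 + ε) ^ 2 - 1 := by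
  nlinarith [sq_nonneg ε]

lemma aux_δ1 {r ε : ℝ} (hr1 : 1 ≤ r) (hε0 : 0 ≤ ε) : 1 ≤ (1 + r) * (1 + ε) ^ 2 - 1 := by
  nlinarith [sq_nonneg ε]

lemma aux_final_lo {δ A P : ℝ} (hδ1 : 1 ≤ δ) (hA0 : 0 ≤ A) (hP0 : 0 ≤ P) :
    (1 - δ) * A ≤ P := by nlinarith

lemma aux_tge {u b a t eM eh : ℝ} (hueh : u * a ≤ eh) (tri2 : eh ≤ t + eM)
    (heM : eM ≤ b * a) : (u - b) * a ≤ t := by nlinarith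

lemma aux_scal {u v b ε : ℝ} (hu0 : 0 ≤ u) (hv0 : 0 ≤ v) (hb0 : 0 ≤ b) (hε0 : 0 ≤ ε)
    (huv : u ≤ v) (hbεv : b ≤ ε * v) (hsum : u ^ 2 + v ^ 2 = 2) :
    2 - v ^ 2 * (1 + ε) ^ 2 ≤ (u - b) ^ 2 := by
  nlinarith [mul_nonneg hb0 (sub_nonneg.2 huv), mul_nonneg hv0 (sub_nonneg.2 hbεv),
    sq_nonneg (ε * v), sq_nonneg b]

lemma aux_two_le {u v ε : ℝ} (hu0 : 0 ≤ u) (hε0 : 0 ≤ ε) (huεv : u ≤ ε * v)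
    (hsum : u ^ 2 + v ^ 2 = 2) : (2:ℝ) ≤ v ^ 2 * (1 + ε) ^ 2 := by
  nlinarith [mul_self_le_mul_self hu0 huεv, mul_nonneg hε0 (sq_nonneg v)]

lemma aux_tle {t eh eM v b a ε : ℝ} (tri1 : t ≤ eh + eM) (hehv : eh ≤ v * a)
    (heM : eM ≤ b * a) (hbεv : b ≤ ε * v) (ha0 : 0 ≤ a) : t ≤ v * (1 + ε) * a := by
  nlinarith [mul_nonneg ha0 (sub_nonneg.2 hbεv)]


set_option maxHeartbeats 1000000

/-- Herman–Strohmer perturbation bound.  If `Φ = Φ̂ + M` and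
`ε_Φ^s = ‖M‖₂^{(s)} / ‖Φ̂‖₂^{(s)}`, then
`δ_s(Φ) ≤ (1 + δ_s(Φ̂)) (1 + ε_Φ^s)² - 1`. -/
theorem ric_perturbation (m n s : ℕ) (hs1 : 1 ≤ s) (hsn : s ≤ n)
    (Φ Φhat M : Matrix (Fin m) (Fin n) ℝ) (hΦ : Φ = Φhat + M)
    (hpos : 0 < colOpNorm Φhat s) :
    ric Φ s ≤ (1 + ric Φhat s) * (1 + colOpNorm M s / colOpNorm Φhat s) ^ 2 - 1 := by
  set r := ric Φhat s with hrdef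
  set c := colOpNorm Φhat s with hcdef
  set b := colOpNorm M s with hbdef
  set ε := b / c with hεdef
  have hr0 : 0 ≤ r := ric_nonneg hsn Φhat
  have hb0 : 0 ≤ b := colOpNorm_nonneg M s hsn
  have hε0 : 0 ≤ ε := div_nonneg hb0 hpos.le
  set v := Real.sqrt (1 + r) with hvdef
  have hv0 : 0 ≤ v := Real.sqrt_nonneg _
  have hv2 : v ^ 2 = 1 + r := Real.sq_sqrt (by linarith)
  have hcv : c ≤ v :=
    colOpNorm_le_of hsn Φhat (1 + r) (by linarith)
      (fun x hx => (ric_bounds hsn Φhat x hx).2)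
  have hbεv : b ≤ ε * v :=
    aux_bεv (div_mul_cancel₀ _ (ne_of_gt hpos)) hcv hε0
  set δ := (1 + r) * (1 + ε) ^ 2 - 1 with hδdef
  have hδ0 : 0 ≤ δ := aux_δ0 hr0 hε0
  rw [ric_eq]
  apply csInf_le (ricSet_bddBelow Φ s)
  refine ⟨hδ0, fun x hx => ?_⟩
  set A := ∑ j, x j ^ 2 with hAdef
  have hA0 : 0 ≤ A := Finset.sum_nonneg fun _ _ => sq_nonneg _
  set a := enorm2 x with hadef
  have ha0 : 0 ≤ a := enorm_nonneg x
  have ha2 : a ^ 2 = A := enorm_sq x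
  set t := enorm2 (Φ.mulVec x) with htdef
  have ht0 : 0 ≤ t := enorm_nonneg _
  have ht2 : t ^ 2 = ∑ i, (Φ.mulVec x i) ^ 2 := enorm_sq _
  set eM := enorm2 (M.mulVec x) with heMdef
  have heM : eM ≤ b * a := enorm_mulVec_sparse hsn M x hx
  have heM0 : 0 ≤ eM := enorm_nonneg _
  set eh := enorm2 (Φhat.mulVec x) with hehdef
  have heh0 : 0 ≤ eh := enorm_nonneg _
  have heh2 : eh ^ 2 = ∑ i, (Φhat.mulVec x i) ^ 2 := enorm_sq _
  obtain ⟨hlo, hup⟩ := ric_bounds hsn Φhat x hx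
  have hmv : Φ.mulVec x = Φhat.mulVec x + M.mulVec x := by rw [hΦ, add_mulVec]
  have tri1 : t ≤ eh + eM := by
    rw [htdef, hmv]; exact enorm2_add_le _ _
  have tri2 : eh ≤ t + eM := by
    have h1 : Φhat.mulVec x = Φ.mulVec x + -(M.mulVec x) := by
      rw [hmv]; abel
    calc eh = enorm2 (Φ.mulVec x + -(M.mulVec x)) := by rw [hehdef, h1]
      _ ≤ t + enorm2 (-(M.mulVec x)) := enorm2_add_le _ _
      _ = t + eM := by rw [enorm2_neg]
  have hehv : eh ≤ v * a := by
    refine le_of_sq_le_sq' heh0 (mul_nonneg hv0 ha0) ?_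
    calc eh ^ 2 = ∑ i, (Φhat.mulVec x i) ^ 2 := heh2
      _ ≤ (1 + r) * A := hup
      _ = (v * a) ^ 2 := by rw [← hv2, ← ha2]; ring
  have hP0 : 0 ≤ ∑ i, (Φ.mulVec x i) ^ 2 := Finset.sum_nonneg fun _ _ => sq_nonneg _
  constructor
  · -- lower bound
    rcases le_or_gt 1 r with hr1 | hr1
    · exact aux_final_lo (hδdef ▸ aux_δ1 hr1 hε0) hA0 hP0
    · set u := Real.sqrt (1 - r) with hudef
      have hu0 : 0 ≤ u := Real.sqrt_nonneg _
      have hu2 : u ^ 2 = 1 - r := Real.sq_sqrt (by linarith)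
      have huv : u ≤ v := Real.sqrt_le_sqrt (by linarith)
      have hsum : u ^ 2 + v ^ 2 = 2 := by rw [hu2, hv2]; ring
      have hueh : u * a ≤ eh := by
        refine le_of_sq_le_sq' (mul_nonneg hu0 ha0) heh0 ?_
        calc (u * a) ^ 2 = (1 - r) * A := by rw [← hu2, ← ha2]; ring
          _ ≤ ∑ i, (Φhat.mulVec x i) ^ 2 := hlo
          _ = eh ^ 2 := heh2.symm
      have htge : (u - b) * a ≤ t := aux_tge hueh tri2 heM
      rcases le_or_gt b u with hbu | hbu
      · have ht2ge : ((u - b) * a) ^ 2 ≤ t ^ 2 :=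
          sq_le_sq_of_le (mul_nonneg (by linarith) ha0) htge
        have hscal : 2 - v ^ 2 * (1 + ε) ^ 2 ≤ (u - b) ^ 2 :=
          aux_scal hu0 hv0 hb0 hε0 huv hbεv hsum
        calc (1 - δ) * A = (2 - v ^ 2 * (1 + ε) ^ 2) * A := by rw [hδdef, hv2]; ring
          _ ≤ (u - b) ^ 2 * A := mul_le_mul_of_nonneg_right hscal hA0
          _ = ((u - b) * a) ^ 2 := by rw [← ha2]; ring
          _ ≤ t ^ 2 := ht2ge
          _ = ∑ i, (Φ.mulVec x i) ^ 2 := ht2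
      · have h2le := aux_two_le hu0 hε0 (le_trans hbu.le hbεv) hsum
        have hδ1 : 1 ≤ δ := by
          have e : (1 + r) * (1 + ε) ^ 2 = v ^ 2 * (1 + ε) ^ 2 := by rw [hv2]
          rw [hδdef, e]; linarith
        exact aux_final_lo hδ1 hA0 hP0
  · -- upper bound
    have htle : t ≤ v * (1 + ε) * a := aux_tle tri1 hehv heM hbεv ha0
    calc ∑ i, (Φ.mulVec x i) ^ 2 = t ^ 2 := ht2.symm
      _ ≤ (v * (1 + ε) * a) ^ 2 := sq_le_sq_of_le ht0 htle
      _ = (1 + δ) * A := by rw [hδdef, ← ha2, ← hv2]; ring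
end
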